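/- Fix σ > 0. For every sequence of parameter pairs (μ_m, 𝒯_m) with μ_m → ∞, 𝒯_m → ∞ and √(log 𝒯_m)/μ_m → 0: in the change-point model with change after time τ (X_1,…,X_τ i.i.d. N(0,1), X_{τ+1},…,X_{𝒯_m} i.i.d. N(μ_m, σ²), all independent) and CUSUM drift parameter μ_m, the supremum over integers 1 ≤ τ ≤ t ≤ 𝒯_m of P(Y_t^LR ≠ V_{t,τ}) tends to 0 as m → ∞; i.e., with probability tending to 1 uniformly in τ and t, the CUSUM maximum is attained at the change point k = τ. -/

import Mathlib

open MeasureTheory ProbabilityTheory Filter Real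
open scoped NNReal ENNReal

noncomputable section

/-- Partial sums of a path: `pS X 0 = 0`, `pS X t = X 1 + ⋯ + X t`. -/
def pS (X : ℕ → ℝ) (t : ℕ) : ℝ := ∑ i ∈ Finset.Icc 1 t, X i

/-- CUSUM quantity `V_{t,k}` with drift parameter μ. -/
def cusumV (μ : ℝ) (X : ℕ → ℝ) (t k : ℕ) : ℝ :=
  (pS X t - pS X k - μ / 2 * ((t : ℝ) - (k : ℝ))) * μ

/-- CUSUM statistic `Y_t^LR = max_{0 ≤ k ≤ t} V_{t,k}`. -/
def Ylr (μ : ℝ) (X : ℕ → ℝ) (t : ℕ) : ℝ := ⨆ k : Fin (t + 1), cusumV μ X t (k : ℕ)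

section Aux

variable {Ω : Type} [MeasurableSpace Ω]

lemma exp_mul_gaussianPDFReal (ν : ℝ) {v : ℝ≥0} (hv : v ≠ 0) (c x : ℝ) :
    Real.exp (c * x) * gaussianPDFReal ν v x
      = Real.exp (c * ν + c ^ 2 * v / 2) * gaussianPDFReal (ν + c * v) v x := by
  have hv' : (0:ℝ) < (v:ℝ) := by exact NNReal.coe_pos.mpr (pos_iff_ne_zero.mpr hv)
  simp only [gaussianPDFReal]
  have key : c*x + -(x-ν)^2/(2*(v:ℝ)) = (c*ν + c^2*(v:ℝ)/2) + -(x-(ν+c*(v:ℝ)))^2/(2*(v:ℝ)) := by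
    field_simp
    ring
  have h : ∀ a b : ℝ, rexp a * ((√(2*π*(v:ℝ)))⁻¹ * rexp b) = (√(2*π*(v:ℝ)))⁻¹ * rexp (a+b) := by
    intro a b; rw [Real.exp_add]; ring
  rw [h, h, key]

lemma integrable_exp_gaussianReal (ν : ℝ) (v : ℝ≥0) (c : ℝ) :
    Integrable (fun x => Real.exp (c * x)) (gaussianReal ν v) := by
  by_cases hv : v = 0
  · subst hv
    rw [gaussianReal_zero_var]
    refine (integrable_const (Real.exp (c * ν))).congr ?_
    rw [Filter.EventuallyEq, MeasureTheory.ae_dirac_eq]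
    exact Filter.eventually_pure.mpr rfl
  · rw [gaussianReal_of_var_ne_zero ν hv, gaussianPDF_def]
    have : (fun x => ENNReal.ofReal (gaussianPDFReal ν v x))
        = fun x => (((fun y => (gaussianPDFReal ν v y).toNNReal) x : ℝ≥0) : ℝ≥0∞) := rfl
    rw [this, integrable_withDensity_iff_integrable_smul
      ((measurable_gaussianPDFReal ν v).real_toNNReal)]
    have heq : (fun x => ((gaussianPDFReal ν v x).toNNReal : ℝ≥0) • Real.exp (c * x))
        = fun x => Real.exp (c * ν + c ^ 2 * v / 2) * gaussianPDFReal (ν + c * v) v x := by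
      funext x
      rw [NNReal.smul_def, smul_eq_mul, Real.coe_toNNReal _ (gaussianPDFReal_nonneg ν v x),
        mul_comm (gaussianPDFReal ν v x), exp_mul_gaussianPDFReal ν hv c x]
    rw [heq]
    exact (integrable_gaussianPDFReal _ _).const_mul _

lemma integral_exp_gaussianReal (ν : ℝ) (v : ℝ≥0) (c : ℝ) :
    ∫ x, Real.exp (c * x) ∂(gaussianReal ν v) = Real.exp (c * ν + c ^ 2 * v / 2) := by
  by_cases hv : v = 0
  · subst hv
    simp [gaussianReal_zero_var, integral_dirac]
  · rw [gaussianReal_of_var_ne_zero ν hv, gaussianPDF_def]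
    have : (fun x => ENNReal.ofReal (gaussianPDFReal ν v x))
        = fun x => (((fun y => (gaussianPDFReal ν v y).toNNReal) x : ℝ≥0) : ℝ≥0∞) := rfl
    rw [this, integral_withDensity_eq_integral_smul
      ((measurable_gaussianPDFReal ν v).real_toNNReal)]
    have heq : (fun x => ((gaussianPDFReal ν v x).toNNReal : ℝ≥0) • Real.exp (c * x))
        = fun x => Real.exp (c * ν + c ^ 2 * v / 2) * gaussianPDFReal (ν + c * v) v x := by
      funext x
      rw [NNReal.smul_def, smul_eq_mul, Real.coe_toNNReal _ (gaussianPDFReal_nonneg ν v x),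
        mul_comm (gaussianPDFReal ν v x), exp_mul_gaussianPDFReal ν hv c x]
    rw [heq, integral_const_mul, integral_gaussianPDFReal_eq_one _ hv, mul_one]

lemma integrable_exp_comp {P : Measure Ω} {X : Ω → ℝ} (hX : Measurable X)
    {ν : ℝ} {v : ℝ≥0} (h : Measure.map X P = gaussianReal ν v) (c : ℝ) :
    Integrable (fun ω => Real.exp (c * X ω)) P := by
  have h1 := integrable_exp_gaussianReal ν v c
  rw [← h] at h1
  exact (integrable_map_measure ((measurable_id.const_mul c).exp).aestronglyMeasurable hX.aemeasurable).mp h1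

lemma mgf_gauss {P : Measure Ω} {X : Ω → ℝ} (hX : Measurable X)
    {ν : ℝ} {v : ℝ≥0} (h : Measure.map X P = gaussianReal ν v) (c : ℝ) :
    mgf X P c = Real.exp (c * ν + c ^ 2 * v / 2) := by
  have hm : AEStronglyMeasurable (fun x => Real.exp (c * x)) (Measure.map X P) :=
    ((measurable_id.const_mul c).exp).aestronglyMeasurable
  rw [show mgf X P c = ∫ x, (fun y => Real.exp (c * y)) (X x) ∂P from rfl,
    ← integral_map hX.aemeasurable hm, h, integral_exp_gaussianReal]

lemma sum_chernoff_ge {P : Measure Ω} [IsProbabilityMeasure P]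
    {ι : Type*} {Y : ι → Ω → ℝ} (hmeas : ∀ i, Measurable (Y i))
    (hind : iIndepFun Y P) (s : Finset ι)
    {ν : ℝ} {v : ℝ≥0} (hlaw : ∀ i ∈ s, Measure.map (Y i) P = gaussianReal ν v)
    (a c : ℝ) (hc : 0 ≤ c) :
    (P {ω | a ≤ ∑ i ∈ s, Y i ω}).toReal
      ≤ Real.exp ((s.card : ℝ) * (c * ν + c ^ 2 * v / 2) - c * a) := by
  have hint : ∀ i ∈ s, Integrable (fun ω => Real.exp (c * Y i ω)) P :=
    fun i hi => integrable_exp_comp (hmeas i) (hlaw i hi) c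
  have h := measure_ge_le_exp_mul_mgf (X := ∑ i ∈ s, Y i) (μ := P) a hc
    (hind.integrable_exp_mul_sum hmeas hint)
  rw [hind.mgf_sum hmeas] at h
  rw [Finset.prod_congr rfl (fun i hi => mgf_gauss (hmeas i) (hlaw i hi) c),
    Finset.prod_const, ← Real.exp_nat_mul, ← Real.exp_add] at h
  have hset : {ω | a ≤ ∑ i ∈ s, Y i ω} = {ω | a ≤ (∑ i ∈ s, Y i) ω} := by
    ext ω; simp [Finset.sum_apply]
  rw [hset]
  refine h.trans (le_of_eq ?_)
  ring_nf

lemma sum_chernoff_le {P : Measure Ω} [IsProbabilityMeasure P]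
    {ι : Type*} {Y : ι → Ω → ℝ} (hmeas : ∀ i, Measurable (Y i))
    (hind : iIndepFun Y P) (s : Finset ι)
    {ν : ℝ} {v : ℝ≥0} (hlaw : ∀ i ∈ s, Measure.map (Y i) P = gaussianReal ν v)
    (a c : ℝ) (hc : c ≤ 0) :
    (P {ω | ∑ i ∈ s, Y i ω ≤ a}).toReal
      ≤ Real.exp ((s.card : ℝ) * (c * ν + c ^ 2 * v / 2) - c * a) := by
  have hint : ∀ i ∈ s, Integrable (fun ω => Real.exp (c * Y i ω)) P :=
    fun i hi => integrable_exp_comp (hmeas i) (hlaw i hi) c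
  have h := measure_le_le_exp_mul_mgf (X := ∑ i ∈ s, Y i) (μ := P) a hc
    (hind.integrable_exp_mul_sum hmeas hint)
  rw [hind.mgf_sum hmeas] at h
  rw [Finset.prod_congr rfl (fun i hi => mgf_gauss (hmeas i) (hlaw i hi) c),
    Finset.prod_const, ← Real.exp_nat_mul, ← Real.exp_add] at h
  have hset : {ω | ∑ i ∈ s, Y i ω ≤ a} = {ω | (∑ i ∈ s, Y i) ω ≤ a} := by
    ext ω; simp [Finset.sum_apply]
  rw [hset]
  refine h.trans (le_of_eq ?_)
  ring_nf

lemma pS_diff (X : ℕ → ℝ) {a b : ℕ} (h : a ≤ b) :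
    pS X b - pS X a = ∑ i ∈ Finset.Ioc a b, X i := by
  have h0 : ∀ n, pS X n = ∑ i ∈ Finset.Ioc 0 n, X i := by
    intro n
    rw [pS]
    congr 1
  rw [h0, h0, ← Finset.sum_Ioc_consecutive X (Nat.zero_le a) h]
  ring

lemma geom_bound {r : ℝ} (h0 : 0 ≤ r) (h1 : r < 1) (n : ℕ) :
    ∑ j ∈ Finset.range n, r ^ (j + 1) ≤ r * (1 - r)⁻¹ := by
  have he : ∑ j ∈ Finset.range n, r ^ (j + 1) = r * ∑ j ∈ Finset.range n, r ^ j := by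
    rw [Finset.mul_sum]
    exact Finset.sum_congr rfl fun j _ => by rw [pow_succ']
  rw [he]
  have h2 : ∑ j ∈ Finset.range n, r ^ j ≤ (1 - r)⁻¹ :=
    sum_le_hasSum _ (fun i _ => pow_nonneg h0 i) (hasSum_geometric_of_lt_one h0 h1)
  exact mul_le_mul_of_nonneg_left h2 h0

end Aux

set_option maxHeartbeats 1000000 in
/-- with μ_m → ∞, 𝒯_m → ∞, √(log 𝒯_m)/μ_m → 0, P(Y_t^LR ≠ V_{t,τ}) tends to 0 uniformly in 1 ≤ τ ≤ t ≤ 𝒯_m: the CUSUM maximum is attained at the change point. -/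
theorem statement9 (σ : ℝ) (hσ : 0 < σ) (μs : ℕ → ℝ) (Ts : ℕ → ℕ)
    (hμ : Tendsto μs atTop atTop) (hT : Tendsto Ts atTop atTop)
    (hrate : Tendsto (fun m => Real.sqrt (Real.log (Ts m : ℝ)) / μs m) atTop (nhds 0)) :
    ∀ ε : ℝ, 0 < ε → ∃ M : ℕ, ∀ m : ℕ, M ≤ m →
      ∀ τ t : ℕ, 1 ≤ τ → τ ≤ t → t ≤ Ts m →
      ∀ (Ω : Type) [MeasurableSpace Ω] (P : Measure Ω) [IsProbabilityMeasure P]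
        (X : ℕ → Ω → ℝ), (∀ i, Measurable (X i)) →
      iIndepFun (fun i : ↥(Set.Icc 1 (Ts m)) => X (i : ℕ)) P →
      (∀ i, 1 ≤ i → i ≤ τ → Measure.map (X i) P = gaussianReal 0 1) →
      (∀ i, τ < i → i ≤ Ts m → Measure.map (X i) P = gaussianReal (μs m) ((σ ^ 2).toNNReal)) →
      (P {ω | Ylr (μs m) (fun i => X i ω) t ≠ cusumV (μs m) (fun i => X i ω) t τ}).toReal ≤ ε := by
  classical
  intro ε hε
  have hσ2 : (0 : ℝ) < σ ^ 2 := by positivity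
  set c₀ : ℝ := min (1 / 8) (1 / (8 * σ ^ 2)) with hc₀def
  have hc₀ : 0 < c₀ := lt_min (by norm_num) (by positivity)
  -- eventual smallness of r
  have htend : Tendsto (fun m => Real.exp (-(μs m ^ 2 * c₀))) atTop (nhds 0) := by
    have h1 : Tendsto (fun m => μs m ^ 2) atTop atTop := by
      have h := hμ.atTop_mul_atTop₀ hμ
      refine h.congr fun m => ?_
      ring
    have h2 : Tendsto (fun m => μs m ^ 2 * c₀) atTop atTop := h1.atTop_mul_const hc₀
    exact Real.tendsto_exp_atBot.comp (tendsto_neg_atTop_atBot.comp h2)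
  have hminpos : 0 < min (1/2 : ℝ) (ε / 4) := lt_min (by norm_num) (by positivity)
  have hev : ∀ᶠ m in atTop,
      Real.exp (-(μs m ^ 2 * c₀)) < min (1/2 : ℝ) (ε / 4) ∧ 0 < μs m :=
    (htend.eventually (gt_mem_nhds hminpos)).and (hμ.eventually_gt_atTop 0)
  obtain ⟨M, hM⟩ := eventually_atTop.mp hev
  refine ⟨M, fun m hm τ t hτ1 hτt htT Ω _ P _ X hXmeas hind h0law h1law => ?_⟩
  obtain ⟨hrε, hμpos⟩ := hM m hm
  set μ : ℝ := μs m with hμdef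
  set r : ℝ := Real.exp (-(μ ^ 2 * c₀)) with hrdef
  have hr0 : 0 ≤ r := (Real.exp_pos _).le
  have hrhalf : r ≤ 1/2 := (hrε.trans_le (min_le_left _ _)).le
  have hr1 : r < 1 := lt_of_le_of_lt hrhalf (by norm_num)
  have hrε4 : r ≤ ε / 4 := (hrε.trans_le (min_le_right _ _)).le
  -- the events
  set A : ℕ → Set Ω := fun k =>
    {ω | cusumV μ (fun i => X i ω) t τ < cusumV μ (fun i => X i ω) t k} with hAdef
  -- Step 1: inclusion into union
  have hsub : {ω | Ylr μ (fun i => X i ω) t ≠ cusumV μ (fun i => X i ω) t τ}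
      ⊆ ⋃ k ∈ Finset.range (t + 1), A k := by
    intro ω hω
    simp only [Set.mem_setOf_eq] at hω
    obtain ⟨k0, hk0⟩ := exists_eq_ciSup_of_finite
      (f := fun k : Fin (t + 1) => cusumV μ (fun i => X i ω) t (k : ℕ))
    have hle : cusumV μ (fun i => X i ω) t τ ≤ Ylr μ (fun i => X i ω) t := by
      have := le_ciSup (f := fun k : Fin (t + 1) => cusumV μ (fun i => X i ω) t (k : ℕ))
        (Set.Finite.bddAbove (Set.finite_range _)) ⟨τ, by omega⟩
      exact this
    have hY : Ylr μ (fun i => X i ω) t = cusumV μ (fun i => X i ω) t (k0 : ℕ) := by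
      rw [Ylr, ← hk0]
    refine Set.mem_iUnion₂.mpr ⟨(k0 : ℕ), Finset.mem_range.mpr k0.isLt, ?_⟩
    have : cusumV μ (fun i => X i ω) t τ < Ylr μ (fun i => X i ω) t :=
      lt_of_le_of_ne hle (Ne.symm hω)
    rw [hY] at this
    exact this
  -- Step 2: union bound
  have hP1 : P {ω | Ylr μ (fun i => X i ω) t ≠ cusumV μ (fun i => X i ω) t τ}
      ≤ ∑ k ∈ Finset.range (t + 1), P (A k) :=
    (measure_mono hsub).trans (measure_biUnion_finset_le _ _)
  -- Step 3: individual bounds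
  have hbound1 : ∀ k, k < τ → (P (A k)).toReal ≤ r ^ (τ - k) := by
    intro k hk
    set s' : Finset ↥(Set.Icc 1 (Ts m)) :=
      (Finset.Ioc k τ).subtype (fun i => i ∈ Set.Icc 1 (Ts m)) with hs'def
    have hmem : ∀ i ∈ Finset.Ioc k τ, i ∈ Set.Icc 1 (Ts m) := by
      intro i hi
      simp only [Finset.mem_Ioc] at hi
      exact Set.mem_Icc.mpr ⟨by omega, by omega⟩
    have hsum_eq : ∀ ω : Ω, (∑ i ∈ s', X (i : ℕ) ω) = ∑ i ∈ Finset.Ioc k τ, X i ω :=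
      fun ω => Finset.sum_subtype_of_mem (fun i => X i ω) hmem
    have hsub2 : A k ⊆ {ω | μ / 2 * ((τ : ℝ) - (k : ℝ)) ≤ ∑ i ∈ s', X (i : ℕ) ω} := by
      intro ω hω
      simp only [hAdef, Set.mem_setOf_eq, cusumV] at hω ⊢
      have h' := (mul_lt_mul_iff_left₀ hμpos).mp hω
      have hS := pS_diff (fun i => X i ω) hk.le
      rw [hsum_eq ω, ← hS]
      linarith
    have hlaw : ∀ i ∈ s', Measure.map (X (i : ℕ)) P = gaussianReal 0 1 := by
      intro i hi
      have hi' : (i : ℕ) ∈ Finset.Ioc k τ := by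
        simpa using Finset.mem_subtype.mp hi
      simp only [Finset.mem_Ioc] at hi'
      exact h0law _ (by omega) hi'.2
    have hch := sum_chernoff_ge (P := P) (Y := fun i : ↥(Set.Icc 1 (Ts m)) => X (i : ℕ)) (fun i => hXmeas (i : ℕ)) hind s' hlaw
      (μ / 2 * ((τ : ℝ) - (k : ℝ))) (μ / 2) (by positivity)
    have hcard : s'.card = τ - k := by
      rw [hs'def, Finset.card_subtype, Finset.filter_true_of_mem hmem, Nat.card_Ioc]
    have hcast : ((τ - k : ℕ) : ℝ) = (τ : ℝ) - (k : ℝ) := by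
      push_cast [Nat.cast_sub hk.le]; ring
    calc (P (A k)).toReal
        ≤ (P {ω | μ / 2 * ((τ : ℝ) - (k : ℝ)) ≤ ∑ i ∈ s', X (i : ℕ) ω}).toReal :=
          ENNReal.toReal_mono (measure_ne_top _ _) (measure_mono hsub2)
      _ ≤ Real.exp ((s'.card : ℝ) * (μ / 2 * 0 + (μ / 2) ^ 2 * ((1 : ℝ≥0) : ℝ) / 2)
            - μ / 2 * (μ / 2 * ((τ : ℝ) - (k : ℝ)))) := hch
      _ ≤ r ^ (τ - k) := by
          rw [hrdef, ← Real.exp_nat_mul, Real.exp_le_exp, hcard, hcast]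
          have hc8 : c₀ ≤ 1 / 8 := min_le_left _ _
          have hN : (0 : ℝ) ≤ (τ : ℝ) - (k : ℝ) := by
            have : (k : ℝ) ≤ (τ : ℝ) := by exact_mod_cast hk.le
            linarith
          have key : ((τ : ℝ) - (k : ℝ)) * (μ ^ 2 * c₀)
              ≤ ((τ : ℝ) - (k : ℝ)) * (μ ^ 2 * (1 / 8)) := by
            have : μ ^ 2 * c₀ ≤ μ ^ 2 * (1 / 8) :=
              mul_le_mul_of_nonneg_left hc8 (sq_nonneg μ)
            exact mul_le_mul_of_nonneg_left this hN
          simp only [NNReal.coe_one]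
          nlinarith [key]
  have hbound2 : ∀ k, τ < k → k ≤ t → (P (A k)).toReal ≤ r ^ (k - τ) := by
    intro k hk hkt
    set s' : Finset ↥(Set.Icc 1 (Ts m)) :=
      (Finset.Ioc τ k).subtype (fun i => i ∈ Set.Icc 1 (Ts m)) with hs'def
    have hmem : ∀ i ∈ Finset.Ioc τ k, i ∈ Set.Icc 1 (Ts m) := by
      intro i hi
      simp only [Finset.mem_Ioc] at hi
      exact Set.mem_Icc.mpr ⟨by omega, by omega⟩
    have hsum_eq : ∀ ω : Ω, (∑ i ∈ s', X (i : ℕ) ω) = ∑ i ∈ Finset.Ioc τ k, X i ω :=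
      fun ω => Finset.sum_subtype_of_mem (fun i => X i ω) hmem
    have hsub2 : A k ⊆ {ω | (∑ i ∈ s', X (i : ℕ) ω) ≤ μ / 2 * ((k : ℝ) - (τ : ℝ))} := by
      intro ω hω
      simp only [hAdef, Set.mem_setOf_eq, cusumV] at hω ⊢
      have h' := (mul_lt_mul_iff_left₀ hμpos).mp hω
      have hS := pS_diff (fun i => X i ω) hk.le
      rw [hsum_eq ω, ← hS]
      linarith
    have hlaw : ∀ i ∈ s', Measure.map (X (i : ℕ)) P = gaussianReal μ ((σ ^ 2).toNNReal) := by
      intro i hi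
      have hi' : (i : ℕ) ∈ Finset.Ioc τ k := by
        simpa using Finset.mem_subtype.mp hi
      simp only [Finset.mem_Ioc] at hi'
      exact h1law _ hi'.1 (by omega)
    have hch := sum_chernoff_le (P := P) (Y := fun i : ↥(Set.Icc 1 (Ts m)) => X (i : ℕ)) (fun i => hXmeas (i : ℕ)) hind s' hlaw
      (μ / 2 * ((k : ℝ) - (τ : ℝ))) (-(μ / (2 * σ ^ 2)))
      (neg_nonpos_of_nonneg (by positivity))
    have hcard : s'.card = k - τ := by
      rw [hs'def, Finset.card_subtype, Finset.filter_true_of_mem hmem, Nat.card_Ioc]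
    have hcast : ((k - τ : ℕ) : ℝ) = (k : ℝ) - (τ : ℝ) := by
      push_cast [Nat.cast_sub hk.le]; ring
    have hvℝ : (((σ ^ 2).toNNReal : ℝ≥0) : ℝ) = σ ^ 2 := Real.coe_toNNReal _ (sq_nonneg σ)
    calc (P (A k)).toReal
        ≤ (P {ω | (∑ i ∈ s', X (i : ℕ) ω) ≤ μ / 2 * ((k : ℝ) - (τ : ℝ))}).toReal :=
          ENNReal.toReal_mono (measure_ne_top _ _) (measure_mono hsub2)
      _ ≤ Real.exp ((s'.card : ℝ) * (-(μ / (2 * σ ^ 2)) * μ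
              + (-(μ / (2 * σ ^ 2))) ^ 2 * (((σ ^ 2).toNNReal : ℝ≥0) : ℝ) / 2)
            - (-(μ / (2 * σ ^ 2))) * (μ / 2 * ((k : ℝ) - (τ : ℝ)))) := hch
      _ ≤ r ^ (k - τ) := by
          rw [hrdef, ← Real.exp_nat_mul, Real.exp_le_exp, hcard, hcast, hvℝ]
          have hc8 : c₀ ≤ 1 / (8 * σ ^ 2) := min_le_right _ _
          have hN : (0 : ℝ) ≤ (k : ℝ) - (τ : ℝ) := by
            have : (τ : ℝ) ≤ (k : ℝ) := by exact_mod_cast hk.le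
            linarith
          set N : ℝ := (k : ℝ) - (τ : ℝ)
          have heq : N * (-(μ / (2 * σ ^ 2)) * μ + (-(μ / (2 * σ ^ 2))) ^ 2 * (σ ^ 2) / 2)
              - (-(μ / (2 * σ ^ 2))) * (μ / 2 * N) = N * (-(μ ^ 2 / (8 * σ ^ 2))) := by
            field_simp
            ring
          rw [heq]
          have key : μ ^ 2 * c₀ ≤ μ ^ 2 / (8 * σ ^ 2) := by
            have := mul_le_mul_of_nonneg_left hc8 (sq_nonneg μ)
            calc μ ^ 2 * c₀ ≤ μ ^ 2 * (1 / (8 * σ ^ 2)) := this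
              _ = μ ^ 2 / (8 * σ ^ 2) := by ring
          have := mul_le_mul_of_nonneg_left key hN
          nlinarith [this]
  -- Step 4: summation
  have hAτ : (P (A τ)).toReal = 0 := by
    have : A τ = ∅ := by
      ext ω
      simp [hAdef]
    simp [this]
  have htop : (∑ k ∈ Finset.range (t + 1), P (A k)) ≠ ⊤ :=
    (ENNReal.sum_lt_top.mpr fun k _ => measure_lt_top P _).ne
  have hmain : (P {ω | Ylr μ (fun i => X i ω) t ≠ cusumV μ (fun i => X i ω) t τ}).toReal
      ≤ ∑ k ∈ Finset.range (t + 1), (P (A k)).toReal := by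
    refine (ENNReal.toReal_mono htop hP1).trans ?_
    rw [ENNReal.toReal_sum fun k _ => measure_ne_top P _]
  -- split the sum
  have hsplit : ∑ k ∈ Finset.range (t + 1), (P (A k)).toReal
      = (∑ k ∈ Finset.range τ, (P (A k)).toReal)
        + ((P (A τ)).toReal + ∑ k ∈ Finset.Ioc τ t, (P (A k)).toReal) := by
    rw [Finset.range_eq_Ico,
      ← Finset.sum_Ico_consecutive _ (Nat.zero_le τ) (show τ ≤ t + 1 by omega),
      ← Finset.range_eq_Ico, Finset.Ico_add_one_right_eq_Icc, Finset.Icc_eq_cons_Ioc hτt,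
      Finset.sum_cons]
  have hsum1 : ∑ k ∈ Finset.range τ, (P (A k)).toReal ≤ r * (1 - r)⁻¹ := by
    calc ∑ k ∈ Finset.range τ, (P (A k)).toReal
        ≤ ∑ k ∈ Finset.range τ, r ^ (τ - k) :=
          Finset.sum_le_sum fun k hk => hbound1 k (Finset.mem_range.mp hk)
      _ = ∑ j ∈ Finset.range τ, r ^ (j + 1) := by
          rw [← Finset.sum_range_reflect (fun j => r ^ (j + 1)) τ]
          refine Finset.sum_congr rfl fun k hk => ?_
          have hk' := Finset.mem_range.mp hk
          rw [show τ - 1 - k + 1 = τ - k by omega]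
      _ ≤ r * (1 - r)⁻¹ := geom_bound hr0 hr1 τ
  have hsum2 : ∑ k ∈ Finset.Ioc τ t, (P (A k)).toReal ≤ r * (1 - r)⁻¹ := by
    have hIoc : Finset.Ioc τ t = Finset.Ico (τ + 1) (t + 1) := by
      ext i
      simp only [Finset.mem_Ioc, Finset.mem_Ico]
      omega
    calc ∑ k ∈ Finset.Ioc τ t, (P (A k)).toReal
        ≤ ∑ k ∈ Finset.Ioc τ t, r ^ (k - τ) := by
          refine Finset.sum_le_sum fun k hk => ?_
          have hk' := Finset.mem_Ioc.mp hk
          exact hbound2 k hk'.1 hk'.2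
      _ = ∑ j ∈ Finset.range (t + 1 - (τ + 1)), r ^ (j + 1) := by
          rw [hIoc, Finset.sum_Ico_eq_sum_range]
          refine Finset.sum_congr rfl fun j hj => ?_
          rw [show τ + 1 + j - τ = j + 1 by omega]
      _ ≤ r * (1 - r)⁻¹ := geom_bound hr0 hr1 _
  have hgeom : r * (1 - r)⁻¹ ≤ 2 * r := by
    have h2 : (0 : ℝ) < 1 - r := by linarith
    have hinv : (1 - r)⁻¹ ≤ 2 := by
      calc (1 - r)⁻¹ ≤ ((1:ℝ)/2)⁻¹ := inv_anti₀ (by norm_num) (by linarith)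
        _ = 2 := by norm_num
    calc r * (1 - r)⁻¹ ≤ r * 2 := mul_le_mul_of_nonneg_left hinv hr0
      _ = 2 * r := by ring
  calc (P {ω | Ylr μ (fun i => X i ω) t ≠ cusumV μ (fun i => X i ω) t τ}).toReal
      ≤ ∑ k ∈ Finset.range (t + 1), (P (A k)).toReal := hmain
    _ = (∑ k ∈ Finset.range τ, (P (A k)).toReal)
        + ((P (A τ)).toReal + ∑ k ∈ Finset.Ioc τ t, (P (A k)).toReal) := hsplit
    _ ≤ r * (1 - r)⁻¹ + (0 + r * (1 - r)⁻¹) := by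
        rw [hAτ]
        exact add_le_add hsum1 (add_le_add le_rfl hsum2)
    _ ≤ 2 * r + (0 + 2 * r) := by
        exact add_le_add hgeom (add_le_add le_rfl hgeom)
    _ ≤ ε := by linarith


end
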